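/- Let m, n ≥ 1 and let S = [[A, B],[Bᵀ, C]] be a covariance matrix (A real symmetric 2m×2m, C real symmetric 2n×2n, B real 2m×2n, S + (i/2)J_{2(m+n)} ≥ 0). Suppose there exists a real symmetric positive semidefinite 2n×2n matrix θ such that C + (i/2)J_{2n} − θ is positive semidefinite and the complex block matrix [[A + (i/2)J_{2m}, B],[Bᵀ, θ]] is positive semidefinite (i.e., S is completely extendable). Then S is separable: there exist real symmetric matrices X (2m×2m) and Y (2n×2n) with X + (i/2)J_{2m} ≥ 0, Y + (i/2)J_{2n} ≥ 0 and S − (X ⊕ Y) positive semidefinite as a real matrix. (One may take Y = C − θ.) -/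

import Mathlib

open Matrix Complex
open scoped Kronecker ComplexOrder

noncomputable section

/-- The standard symplectic-form matrix `J_{2n}`: the block-diagonal direct sum of `n`
copies of `[[0,1],[-1,0]]`. -/
def Jmat (n : ℕ) : Matrix (Fin (2 * n)) (Fin (2 * n)) ℝ := fun i j =>
  if i.val + 1 = j.val ∧ i.val % 2 = 0 then 1
  else if j.val + 1 = i.val ∧ j.val % 2 = 0 then -1 else 0

/-- Embedding of real matrices into complex matrices. -/
def toC {p q : Type*} (M : Matrix p q ℝ) : Matrix p q ℂ := M.map (fun x => (x : ℂ))

/-- The `k`-extension `S_k(A,B,C,θ)` of the block covariance matrix `[[A,B],[Bᵀ,C]]`: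
the `(0,0)`-block is `A`, the blocks coupling the `0`-component to each of the `k` copies
are `B` (with `Bᵀ` below), the diagonal blocks on the copies are `C`, and the block between
copies `a < b` is `θ` (and `θᵀ` between copies `a > b`). -/
def Sext {m n : ℕ} (k : ℕ) (A : Matrix (Fin (2 * m)) (Fin (2 * m)) ℝ)
    (B : Matrix (Fin (2 * m)) (Fin (2 * n)) ℝ)
    (C θ : Matrix (Fin (2 * n)) (Fin (2 * n)) ℝ) :
    Matrix (Fin (2 * m) ⊕ Fin k × Fin (2 * n)) (Fin (2 * m) ⊕ Fin k × Fin (2 * n)) ℝ :=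
  fun x y =>
    match x, y with
    | Sum.inl i, Sum.inl j => A i j
    | Sum.inl i, Sum.inr (_, j) => B i j
    | Sum.inr (_, i), Sum.inl j => B j i
    | Sum.inr (a, i), Sum.inr (b, j) =>
        if a = b then C i j else if a < b then θ i j else θ j i

/-- The symplectic-form matrix `J' = J_{2m} ⊕ (I_k ⊗ J_{2n})` on the index set of `S_k`. -/
def Jext (m n k : ℕ) :
    Matrix (Fin (2 * m) ⊕ Fin k × Fin (2 * n)) (Fin (2 * m) ⊕ Fin k × Fin (2 * n)) ℝ :=
  Matrix.fromBlocks (Jmat m) 0 0 ((1 : Matrix (Fin k) (Fin k) ℝ) ⊗ₖ Jmat n)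


lemma toC_mul {p q r : Type*} [Fintype q] (M : Matrix p q ℝ) (N : Matrix q r ℝ) :
    toC (M * N) = toC M * toC N :=
  Matrix.map_mul (f := Complex.ofRealHom)

lemma toC_transpose {p q : Type*} (M : Matrix p q ℝ) : toC Mᵀ = (toC M)ᵀ :=
  Matrix.transpose_map

lemma toC_sub {p q : Type*} (M N : Matrix p q ℝ) : toC (M - N) = toC M - toC N := by
  ext i j; simp [toC]

lemma toC_inj {p q : Type*} {M N : Matrix p q ℝ} (h : toC M = toC N) : M = N := by
  ext i j
  have h2 : toC M i j = toC N i j := by rw [h]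
  simpa [toC] using h2

lemma exists_pinv {k : Type*} [Fintype k] [DecidableEq k] {θ : Matrix k k ℝ}
    (hθ : θ.IsHermitian) :
    ∃ p : Matrix k k ℝ, pᵀ = p ∧ θ * p * θ = θ ∧ p * θ * p = p := by
  set U : Matrix k k ℝ := (hθ.eigenvectorUnitary : Matrix k k ℝ) with hUdef
  have hU1 : U * star U = 1 := Matrix.mem_unitaryGroup_iff.mp (hθ.eigenvectorUnitary).2
  have hU2 : star U * U = 1 := Matrix.mem_unitaryGroup_iff'.mp (hθ.eigenvectorUnitary).2
  set d : k → ℝ := hθ.eigenvalues with hddef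
  set e : k → ℝ := fun i => if d i = 0 then 0 else (d i)⁻¹ with hedef
  have hspec : θ = U * diagonal d * star U := by
    have := hθ.spectral_theorem
    simpa [RCLike.ofReal_real_eq_id] using this
  have key : ∀ f g : k → ℝ,
      (U * diagonal f * star U) * (U * diagonal g * star U)
        = U * diagonal (f * g) * star U := by
    intro f g
    simp only [Matrix.mul_assoc]
    rw [← Matrix.mul_assoc (star U) U, hU2, Matrix.one_mul,
      ← Matrix.mul_assoc (diagonal f), Matrix.diagonal_mul_diagonal]
    rfl
  have hsU : star U = Uᵀ := by
    rw [Matrix.star_eq_conjTranspose, Matrix.conjTranspose_eq_transpose_of_trivial]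
  refine ⟨U * diagonal e * star U, ?_, ?_, ?_⟩
  · simp [hsU, Matrix.transpose_mul, Matrix.diagonal_transpose, Matrix.mul_assoc]
  · have hde : d * e * d = d := by
      funext i
      by_cases h : d i = 0 <;> simp [hedef, Pi.mul_apply, h]
    rw [hspec, key, key, hde]
  · have hed : e * d * e = e := by
      funext i
      by_cases h : d i = 0 <;> simp [hedef, Pi.mul_apply, h]
    rw [hspec, key, key, hed]

lemma submatrix_fromBlocks₁₁ {l o p q : Type*} {α : Type*}
    (T1 : Matrix l p α) (T2 : Matrix l q α) (T3 : Matrix o p α) (T4 : Matrix o q α) :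
    (Matrix.fromBlocks T1 T2 T3 T4).submatrix Sum.inl Sum.inl = T1 := by
  ext i j; rfl

/-- Theorem 3: every completely extendable Gaussian covariance matrix is separable (in the
sense of Werner--Wolf). -/
theorem completely_extendable_implies_separable
    {m n : ℕ} (hm : 1 ≤ m) (hn : 1 ≤ n)
    (A : Matrix (Fin (2 * m)) (Fin (2 * m)) ℝ) (hA : A.IsSymm)
    (C : Matrix (Fin (2 * n)) (Fin (2 * n)) ℝ) (hC : C.IsSymm)
    (B : Matrix (Fin (2 * m)) (Fin (2 * n)) ℝ)
    (hS : (toC (Matrix.fromBlocks A B Bᵀ C) +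
      (Complex.I / 2) • toC (Matrix.fromBlocks (Jmat m) 0 0 (Jmat n))).PosSemidef)
    (hext : ∃ θ : Matrix (Fin (2 * n)) (Fin (2 * n)) ℝ, θ.PosSemidef ∧
      (toC C + (Complex.I / 2) • toC (Jmat n) - toC θ).PosSemidef ∧
      (Matrix.fromBlocks (toC A + (Complex.I / 2) • toC (Jmat m)) (toC B)
        (toC B)ᵀ (toC θ)).PosSemidef) :
    ∃ (X : Matrix (Fin (2 * m)) (Fin (2 * m)) ℝ)
      (Y : Matrix (Fin (2 * n)) (Fin (2 * n)) ℝ), X.IsSymm ∧ Y.IsSymm ∧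
      (toC X + (Complex.I / 2) • toC (Jmat m)).PosSemidef ∧
      (toC Y + (Complex.I / 2) • toC (Jmat n)).PosSemidef ∧
      (Matrix.fromBlocks A B Bᵀ C - Matrix.fromBlocks X 0 0 Y).PosSemidef := by
  obtain ⟨θ, hθ, hCθ, hM⟩ := hext
  have hθsymm : θᵀ = θ := by
    have := hθ.isHermitian
    rwa [Matrix.IsHermitian, Matrix.conjTranspose_eq_transpose_of_trivial] at this
  obtain ⟨p, hp, hθpθ, hpθp⟩ := exists_pinv hθ.isHermitian
  set Mmat := Matrix.fromBlocks (toC A + (Complex.I / 2) • toC (Jmat m)) (toC B)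
      (toC B)ᵀ (toC θ) with hMmat
  -- kernel fact : B * (p * θ) = B
  obtain ⟨N, hN⟩ : ∃ N : Matrix (Fin (2*m) ⊕ Fin (2*n)) (Fin (2*m) ⊕ Fin (2*n)) ℂ,
      Matrix.fromBlocks (toC A + (Complex.I / 2) • toC (Jmat m)) (toC B)
        (toC B)ᵀ (toC θ) = Nᴴ * N := by
    open scoped MatrixOrder in
    obtain ⟨N, hN⟩ := CStarAlgebra.nonneg_iff_eq_star_mul_self.mp hM.nonneg
    exact ⟨N, hN⟩
  set N₁ : Matrix (Fin (2*m) ⊕ Fin (2*n)) (Fin (2*m)) ℂ := N.submatrix id Sum.inl with hN₁def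
  set N₂ : Matrix (Fin (2*m) ⊕ Fin (2*n)) (Fin (2*n)) ℂ := N.submatrix id Sum.inr with hN₂def
  have hθN : toC θ = N₂ᴴ * N₂ := by
    ext i j
    have h2 := Matrix.ext_iff.2 hN (Sum.inr i) (Sum.inr j)
    simpa [Matrix.mul_apply, Matrix.conjTranspose_apply, hN₂def] using h2
  have hBN : toC B = N₁ᴴ * N₂ := by
    ext i j
    have h2 := Matrix.ext_iff.2 hN (Sum.inl i) (Sum.inr j)
    simpa [Matrix.mul_apply, Matrix.conjTranspose_apply, hN₁def, hN₂def] using h2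
  have hθZ : toC θ * (1 - toC p * toC θ) = 0 := by
    have h3 : θ * (p * θ) = θ := by rw [← Matrix.mul_assoc]; exact hθpθ
    rw [Matrix.mul_sub, Matrix.mul_one, ← Matrix.mul_assoc, ← toC_mul, ← toC_mul,
      Matrix.mul_assoc, h3, sub_self]
  have hN₂Z : N₂ * (1 - toC p * toC θ) = 0 := by
    rw [← Matrix.conjTranspose_mul_self_mul_eq_zero N₂, ← hθN]
    exact hθZ
  have hBZ : toC B * (1 - toC p * toC θ) = 0 := by
    rw [hBN, Matrix.mul_assoc, hN₂Z, Matrix.mul_zero]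
  have hBpθ : B * (p * θ) = B := by
    apply toC_inj
    rw [Matrix.mul_sub, Matrix.mul_one, sub_eq_zero] at hBZ
    rw [toC_mul, toC_mul, ← hBZ]
  set X := A - B * p * Bᵀ with hX
  set Y := C - θ with hY
  have hBpθ' : B * p * θ = B := by rw [Matrix.mul_assoc]; exact hBpθ
  refine ⟨X, Y, ?_, ?_, ?_, ?_, ?_⟩
  · show Xᵀ = X
    rw [hX, Matrix.transpose_sub, hA.eq, Matrix.transpose_mul, Matrix.transpose_mul,
      Matrix.transpose_transpose, hp, Matrix.mul_assoc]
  · show Yᵀ = Y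
    rw [hY, Matrix.transpose_sub, hC.eq, hθsymm]
  · -- complex PSD for X
    set G : Matrix (Fin (2*m) ⊕ Fin (2*n)) (Fin (2*m) ⊕ Fin (2*n)) ℂ :=
      Matrix.fromBlocks 1 0 (-(toC p * (toC B)ᵀ)) 1 with hG
    have hBcH : ((toC B)ᵀ)ᴴ = toC B := by
      ext i j; simp [toC, Matrix.conjTranspose_apply]
    have hpcH : (toC p)ᴴ = toC p := by
      ext i j
      simp only [toC, Matrix.conjTranspose_apply, Matrix.map_apply, RCLike.star_def,
        Complex.conj_ofReal]
      exact_mod_cast congrFun (congrFun hp i) j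
    have hGH : Gᴴ = Matrix.fromBlocks 1 (-(toC B * toC p)) 0 1 := by
      rw [hG, Matrix.fromBlocks_conjTranspose, Matrix.conjTranspose_neg,
        Matrix.conjTranspose_mul, hBcH, hpcH]
      simp
    have hc : toC p * toC θ * toC p = toC p := by
      rw [← toC_mul, ← toC_mul]; exact congrArg toC hpθp
    have hkey : toC p * (toC θ * (toC p * (toC B)ᵀ)) = toC p * (toC B)ᵀ := by
      rw [← Matrix.mul_assoc, ← Matrix.mul_assoc, hc]
    have key3 : (Gᴴ * Mmat * G).submatrix Sum.inl Sum.inl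
        = toC X + (Complex.I / 2) • toC (Jmat m) := by
      rw [hGH, hMmat, hG, Matrix.fromBlocks_multiply, Matrix.fromBlocks_multiply,
        submatrix_fromBlocks₁₁]
      rw [hX, toC_sub, toC_mul, toC_mul, toC_transpose]
      simp only [Matrix.one_mul, Matrix.mul_one, Matrix.zero_mul, Matrix.mul_zero,
        Matrix.neg_mul, Matrix.mul_neg, neg_neg, Matrix.add_mul, Matrix.mul_add,
        Matrix.mul_assoc, hkey]
      abel
    have h6 := (hM.conjTranspose_mul_mul_same G).submatrix Sum.inl
    rwa [key3] at h6
  · have h4 : toC Y + (Complex.I / 2) • toC (Jmat n)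
        = toC C + (Complex.I / 2) • toC (Jmat n) - toC θ := by
      rw [hY, toC_sub]; abel
    rwa [h4]
  · -- real PSD
    set W : Matrix (Fin (2*n)) (Fin (2*m) ⊕ Fin (2*n)) ℝ :=
      Matrix.fromCols (p * Bᵀ) 1 with hW
    have hWH : Wᴴ = Matrix.fromRows (B * p) 1 := by
      rw [hW, Matrix.conjTranspose_eq_transpose_of_trivial, Matrix.transpose_fromCols,
        Matrix.transpose_mul, Matrix.transpose_transpose, hp, Matrix.transpose_one]
    have hθpB : θ * (p * Bᵀ) = Bᵀ := by
      have h5 := congrArg Matrix.transpose hBpθ'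
      rwa [Matrix.transpose_mul, Matrix.transpose_mul, hθsymm, hp] at h5
    have hfact : Wᴴ * θ * W = Matrix.fromBlocks (B * p * Bᵀ) B Bᵀ θ := by
      rw [hWH, Matrix.fromRows_mul, Matrix.fromRows_mul_fromCols, hBpθ',
        Matrix.one_mul, Matrix.mul_one, Matrix.mul_one, hθpB, ← Matrix.mul_assoc]
    have h7 : Matrix.fromBlocks A B Bᵀ C - Matrix.fromBlocks X 0 0 Y
        = Matrix.fromBlocks (B * p * Bᵀ) B Bᵀ θ := by
      rw [hX, hY]
      ext (i | i) (j | j) <;>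
        simp [Matrix.fromBlocks, Matrix.sub_apply]
    rw [h7, ← hfact]
    exact hθ.conjTranspose_mul_mul_same W
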